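/- The polynomial ring ℂ[x_1,…,x_n], with the left W_n-module structure given by applying operators, is a simple W_n-module: its only W_n-submodules are 0 and ℂ[x_1,…,x_n]. Equivalently, for every nonzero polynomial p ∈ ℂ[x_1,…,x_n], the set {o • p | o ∈ W_n} equals all of ℂ[x_1,…,x_n]. -/

import Mathlib

set_option synthInstance.maxHeartbeats 400000
set_option maxHeartbeats 1000000

open MvPolynomial

noncomputable def mulOp (n : ℕ) (i : Fin n) : Module.End ℂ (MvPolynomial (Fin n) ℂ) :=
  (Algebra.lmul ℂ (MvPolynomial (Fin n) ℂ)) (X i)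

noncomputable def derOp (n : ℕ) (i : Fin n) : Module.End ℂ (MvPolynomial (Fin n) ℂ) :=
  (pderiv (R := ℂ) i).toLinearMap

noncomputable def WeylSub (n : ℕ) : Subalgebra ℂ (Module.End ℂ (MvPolynomial (Fin n) ℂ)) :=
  Algebra.adjoin ℂ (Set.range (mulOp n) ∪ Set.range (derOp n))

def Weyl (n : ℕ) : Type := WeylSub n

noncomputable instance (n : ℕ) : Ring (Weyl n) := inferInstanceAs (Ring (WeylSub n))

noncomputable instance (n : ℕ) : Module (Weyl n) (MvPolynomial (Fin n) ℂ) :=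
  inferInstanceAs (Module (WeylSub n) (MvPolynomial (Fin n) ℂ))

-- auxiliary lemmas

lemma pderiv_as_sum {n : ℕ} (i : Fin n) (p : MvPolynomial (Fin n) ℂ) :
    pderiv i p = ∑ m ∈ p.support,
      monomial (m - Finsupp.single i 1) (coeff m p * m i) := by
  conv_lhs => rw [p.as_sum]
  rw [map_sum]
  exact Finset.sum_congr rfl fun m _ => pderiv_monomial

lemma coeff_pderiv' {n : ℕ} (i : Fin n) (p : MvPolynomial (Fin n) ℂ) (t : Fin n →₀ ℕ) :
    coeff t (pderiv i p) = ∑ m ∈ p.support,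
      (if m - Finsupp.single i 1 = t then coeff m p * m i else 0) := by
  rw [pderiv_as_sum, MvPolynomial.coeff_sum]
  exact Finset.sum_congr rfl fun m _ => coeff_monomial _ _ _

lemma sum_sub_single {n : ℕ} (i : Fin n) (m : Fin n →₀ ℕ) (hm : m i ≠ 0) :
    (m - Finsupp.single i 1).sum (fun _ k => k) + 1 = m.sum (fun _ k => k) := by
  have h : Finsupp.single i 1 ≤ m := by
    rw [Finsupp.single_le_iff]; omega
  have h2 : m - Finsupp.single i 1 + Finsupp.single i 1 = m := tsub_add_cancel_of_le h
  conv_rhs => rw [← h2]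
  rw [Finsupp.sum_add_index' (fun _ => rfl) (fun _ _ _ => rfl)]
  simp [Finsupp.sum_single_index]

lemma totalDegree_pderiv_lt {n : ℕ} {p : MvPolynomial (Fin n) ℂ}
    (hp : 0 < p.totalDegree) (i : Fin n) :
    (pderiv i p).totalDegree < p.totalDegree := by
  rw [MvPolynomial.totalDegree]
  rw [Finset.sup_lt_iff (show ⊥ < p.totalDegree from hp)]
  intro t ht
  rw [MvPolynomial.mem_support_iff, coeff_pderiv' i p t] at ht
  obtain ⟨m, hm, hne⟩ := Finset.exists_ne_zero_of_sum_ne_zero ht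
  split_ifs at hne with heq
  · have hmi : m i ≠ 0 := by
      intro h0; simp [h0] at hne
    have := sum_sub_single i m hmi
    have hle := MvPolynomial.le_totalDegree (p := p) hm
    have : t.sum (fun _ k => k) + 1 = m.sum (fun _ k => k) := heq ▸ this
    omega
  · exact absurd rfl hne

lemma pderiv_ne_zero {n : ℕ} {p : MvPolynomial (Fin n) ℂ} {m : Fin n →₀ ℕ}
    (hm : m ∈ p.support) {i : Fin n} (hmi : m i ≠ 0) :
    pderiv i p ≠ 0 := by
  intro h0
  have : coeff (m - Finsupp.single i 1) (pderiv i p) = coeff m p * m i := by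
    rw [coeff_pderiv']
    rw [Finset.sum_eq_single m]
    · simp
    · intro m' hm' hne
      split_ifs with heq
      · by_cases h : m' i = 0
        · simp [h]
        · exfalso
          apply hne
          have h1 : Finsupp.single i 1 ≤ m' := by rw [Finsupp.single_le_iff]; omega
          have h2 : Finsupp.single i 1 ≤ m := by rw [Finsupp.single_le_iff]; omega
          have := congrArg (· + Finsupp.single i 1) heq
          simpa [tsub_add_cancel_of_le h1, tsub_add_cancel_of_le h2] using this
      · rfl
    · intro h; exact absurd hm h
  rw [h0] at this
  simp only [coeff_zero] at this
  have hc : coeff m p ≠ 0 := MvPolynomial.mem_support_iff.mp hm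
  exact mul_ne_zero hc (Nat.cast_ne_zero.mpr hmi) this.symm

lemma derOp_mem {n : ℕ} (i : Fin n) : derOp n i ∈ WeylSub n :=
  Algebra.subset_adjoin (Or.inr ⟨i, rfl⟩)

lemma lmul_mem {n : ℕ} (q : MvPolynomial (Fin n) ℂ) :
    Algebra.lmul ℂ (MvPolynomial (Fin n) ℂ) q ∈ WeylSub n := by
  have hq : q ∈ Subalgebra.comap (Algebra.lmul ℂ (MvPolynomial (Fin n) ℂ)) (WeylSub n) := by
    have htop : (⊤ : Subalgebra ℂ (MvPolynomial (Fin n) ℂ)) ≤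
        Subalgebra.comap (Algebra.lmul ℂ (MvPolynomial (Fin n) ℂ)) (WeylSub n) := by
      rw [← MvPolynomial.adjoin_range_X]
      apply Algebra.adjoin_le
      rintro _ ⟨i, rfl⟩
      exact Algebra.subset_adjoin (Or.inl ⟨i, rfl⟩)
    exact htop trivial
  exact hq

lemma exists_to_C {n : ℕ} (p : MvPolynomial (Fin n) ℂ) (hp : p ≠ 0) :
    ∃ o ∈ WeylSub n, ∃ c : ℂ, c ≠ 0 ∧ o p = C c := by
  generalize hd : p.totalDegree = d
  induction d using Nat.strong_induction_on generalizing p with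
  | _ d ih =>
    rcases Nat.eq_zero_or_pos d with h0 | h0
    · subst h0
      refine ⟨1, one_mem _, coeff 0 p, ?_, ?_⟩
      · intro hc
        apply hp
        ext m
        by_cases hm : m = 0
        · simp [hm, hc]
        · rw [coeff_zero, ← not_ne_iff, ← MvPolynomial.mem_support_iff]
          intro hmem
          obtain ⟨x, hx⟩ : ∃ x, m x ≠ 0 := by
            by_contra h
            push_neg at h
            exact hm (Finsupp.ext h)
          exact hx ((MvPolynomial.totalDegree_eq_zero_iff _ p).mp hd m hmem x)
      · show p = C (coeff 0 p)
        ext m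
        by_cases hm : m = 0
        · simp [hm]
        · rw [coeff_C, if_neg (Ne.symm hm), ← not_ne_iff, ← MvPolynomial.mem_support_iff]
          intro hmem
          obtain ⟨x, hx⟩ : ∃ x, m x ≠ 0 := by
            by_contra h
            push_neg at h
            exact hm (Finsupp.ext h)
          exact hx ((MvPolynomial.totalDegree_eq_zero_iff _ p).mp hd m hmem x)
    · -- find m in support with positive sum
      have hd0 : 0 < p.totalDegree := hd ▸ h0
      obtain ⟨m, hm, hmsum⟩ : ∃ m ∈ p.support, 0 < m.sum (fun _ k => k) := by
        by_contra h
        push_neg at h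
        have : p.totalDegree = 0 := by
          apply Nat.le_zero.mp
          apply Finset.sup_le
          intro m hmm
          exact h m hmm
        omega
      obtain ⟨i, hi⟩ : ∃ i, m i ≠ 0 := by
        by_contra h
        push_neg at h
        rw [Finsupp.sum] at hmsum
        simp [h] at hmsum
      have hne := pderiv_ne_zero hm hi
      have hlt := totalDegree_pderiv_lt hd0 i
      obtain ⟨o, ho, c, hc, hoc⟩ := ih (pderiv i p).totalDegree (hd ▸ hlt) (pderiv i p) hne rfl
      refine ⟨o * derOp n i, mul_mem ho (derOp_mem i), c, hc, ?_⟩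
      rw [Module.End.mul_apply]
      exact hoc

/-- `ℂ[x_1,…,x_n]`, with operators acting by application, is a simple left `W_n`-module:
its only submodules are `⊥` and `⊤`; equivalently, for every nonzero polynomial `p` the
set `{o • p | o ∈ W_n}` is all of `ℂ[x_1,…,x_n]`. -/
theorem polynomialRing_isSimpleModule_weyl (n : ℕ) :
    IsSimpleModule (Weyl n) (MvPolynomial (Fin n) ℂ) ∧
    (∀ p : MvPolynomial (Fin n) ℂ, p ≠ 0 →
      ∀ q : MvPolynomial (Fin n) ℂ, ∃ o : Weyl n, o • p = q) := by
  have key : ∀ p : MvPolynomial (Fin n) ℂ, p ≠ 0 →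
      ∀ q : MvPolynomial (Fin n) ℂ, ∃ o : Weyl n, o • p = q := by
    intro p hp q
    obtain ⟨o, ho, c, hc, hoc⟩ := exists_to_C p hp
    refine ⟨⟨Algebra.lmul ℂ (MvPolynomial (Fin n) ℂ) (c⁻¹ • q) * o,
      mul_mem (lmul_mem _) ho⟩, ?_⟩
    show (Algebra.lmul ℂ (MvPolynomial (Fin n) ℂ) (c⁻¹ • q) * o) p = q
    rw [Module.End.mul_apply, hoc]
    show (c⁻¹ • q) * C c = q
    rw [mul_comm, ← MvPolynomial.smul_eq_C_mul, smul_smul, mul_inv_cancel₀ hc, one_smul]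
  refine ⟨?_, key⟩
  haveI : Nontrivial (Submodule (Weyl n) (MvPolynomial (Fin n) ℂ)) := by
    refine ⟨⊥, ⊤, fun h => ?_⟩
    have h1 : (1 : MvPolynomial (Fin n) ℂ) ∈ (⊥ : Submodule (Weyl n) (MvPolynomial (Fin n) ℂ)) := by
      rw [h]; trivial
    simp at h1
  rw [isSimpleModule_iff]
  constructor
  intro N
  by_cases hN : N = ⊥
  · exact Or.inl hN
  · right
    obtain ⟨p, hpN, hp⟩ := Submodule.exists_mem_ne_zero_of_ne_bot hN
    rw [eq_top_iff]
    intro q _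
    obtain ⟨o, ho⟩ := key p hp q
    exact ho ▸ N.smul_mem o hpN
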